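/- Anisimov–Seifert Theorem: a subgroup H of a group G is a rational subset of G if and only if H is finitely generated. -/

import Mathlib

open Pointwise

/-- Rational subsets of a monoid `M`: the smallest class containing finite
subsets and closed under union, setwise product and generated submonoid. -/
inductive IsRationalSubset {M : Type} [Monoid M] : Set M → Prop
  | finite (L : Set M) : L.Finite → IsRationalSubset L
  | union {K L : Set M} : IsRationalSubset K → IsRationalSubset L → IsRationalSubset (K ∪ L)
  | mul {K L : Set M} : IsRationalSubset K → IsRationalSubset L → IsRationalSubset (K * L)
  | star {L : Set M} : IsRationalSubset L → IsRationalSubset (Submonoid.closure L : Set M)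

namespace AniSei

variable {G : Type} [Monoid G]

/-- A (nondeterministic, ε-free) automaton with labels in `G`. -/
structure FA (G : Type) [Monoid G] : Type 1 where
  Q : Type
  start : Q → Prop
  accept : Q → Prop
  tr : Q → G → Q → Prop

/-- A labelled path in the automaton. -/
inductive FA.Chain (A : FA G) : A.Q → List G → A.Q → Prop
  | nil (q : A.Q) : FA.Chain A q [] q
  | cons {p q r : A.Q} {g : G} {w : List G} :
      A.tr p g q → FA.Chain A q w r → FA.Chain A p (g :: w) r

/-- The subset of `G` recognized: products of labels along accepted paths. -/
def FA.Lang (A : FA G) : Set G :=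
  { x | ∃ w s f, A.start s ∧ A.accept f ∧ A.Chain s w f ∧ w.prod = x }

def FA.Letters (A : FA G) : Set G := { g | ∃ p q, A.tr p g q }

theorem FA.Chain.append {A : FA G} {p q r : A.Q} {w w' : List G}
    (h1 : A.Chain p w q) (h2 : A.Chain q w' r) : A.Chain p (w ++ w') r := by
  induction h1 with
  | nil => simpa using h2
  | cons t _ ih => exact FA.Chain.cons t (ih h2)

theorem FA.Chain.nil_eq {A : FA G} {p q : A.Q} (h : A.Chain p [] q) : p = q := by
  cases h; rfl

theorem FA.Chain.cons_inv {A : FA G} {p r : A.Q} {g : G} {w : List G}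
    (h : A.Chain p (g :: w) r) : ∃ q, A.tr p g q ∧ A.Chain q w r := by
  cases h with
  | cons t c => exact ⟨_, t, c⟩

/-! ### Automaton for a finite set -/

def FA.ofSet (L : Set G) : FA G where
  Q := Bool
  start q := q = false
  accept q := q = true
  tr p g q := p = false ∧ q = true ∧ g ∈ L

theorem FA.ofSet_chain (L : Set G) : ∀ {x w y}, (FA.ofSet L).Chain x w y →
    (x = y ∧ w = []) ∨ (x = false ∧ y = true ∧ ∃ g ∈ L, w = [g]) := by
  intro x w y h
  induction h with
  | nil => exact Or.inl ⟨rfl, rfl⟩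
  | cons t c ih =>
    obtain ⟨hp, hq, hg⟩ := t
    rcases ih with ⟨rfl, rfl⟩ | ⟨h1, -, -⟩
    · exact Or.inr ⟨hp, hq, _, hg, rfl⟩
    · rw [hq] at h1; simp at h1

theorem FA.ofSet_lang (L : Set G) : (FA.ofSet L).Lang = L := by
  ext x
  constructor
  · rintro ⟨w, s, f, hs, hf, hc, rfl⟩
    rcases FA.ofSet_chain L hc with ⟨rfl, rfl⟩ | ⟨-, -, g, hg, rfl⟩
    · change s = false at hs
      change s = true at hf
      rw [hs] at hf; simp at hf
    · simpa using hg
  · intro hx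
    exact ⟨[x], false, true, rfl, rfl,
      FA.Chain.cons ⟨rfl, rfl, hx⟩ (FA.Chain.nil _), by simp⟩

theorem FA.ofSet_letters (L : Set G) : (FA.ofSet L).Letters ⊆ L := by
  rintro g ⟨p, q, -, -, hg⟩; exact hg

/-! ### Union -/

def FA.union (A B : FA G) : FA G where
  Q := A.Q ⊕ B.Q
  start := Sum.elim A.start B.start
  accept := Sum.elim A.accept B.accept
  tr x g y :=
    match x, y with
    | .inl p, .inl q => A.tr p g q
    | .inr p, .inr q => B.tr p g q
    | _, _ => False

theorem FA.union_chain_inl (A B : FA G) : ∀ {x w y}, (A.union B).Chain x w y →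
    ∀ p, x = Sum.inl p → ∃ q, y = Sum.inl q ∧ A.Chain p w q := by
  intro x w y h
  induction h with
  | nil q => exact fun p hp => ⟨p, hp, FA.Chain.nil p⟩
  | @cons x' q' r g w t c ih =>
    rintro p rfl
    match q', t with
    | .inl q', t =>
      obtain ⟨q, rfl, hc⟩ := ih q' rfl
      exact ⟨q, rfl, FA.Chain.cons t hc⟩

theorem FA.union_chain_inr (A B : FA G) : ∀ {x w y}, (A.union B).Chain x w y →
    ∀ p, x = Sum.inr p → ∃ q, y = Sum.inr q ∧ B.Chain p w q := by
  intro x w y h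
  induction h with
  | nil q => exact fun p hp => ⟨p, hp, FA.Chain.nil p⟩
  | @cons x' q' r g w t c ih =>
    rintro p rfl
    match q', t with
    | .inr q', t =>
      obtain ⟨q, rfl, hc⟩ := ih q' rfl
      exact ⟨q, rfl, FA.Chain.cons t hc⟩

theorem FA.union_chain_of_inl (A B : FA G) {p w q} (h : A.Chain p w q) :
    (A.union B).Chain (Sum.inl p) w (Sum.inl q) := by
  induction h with
  | nil q => exact FA.Chain.nil _
  | cons t _ ih => exact FA.Chain.cons (show (A.union B).tr (.inl _) _ (.inl _) from t) ih

theorem FA.union_chain_of_inr (A B : FA G) {p w q} (h : B.Chain p w q) :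
    (A.union B).Chain (Sum.inr p) w (Sum.inr q) := by
  induction h with
  | nil q => exact FA.Chain.nil _
  | cons t _ ih => exact FA.Chain.cons (show (A.union B).tr (.inr _) _ (.inr _) from t) ih

theorem FA.union_lang (A B : FA G) : (A.union B).Lang = A.Lang ∪ B.Lang := by
  ext x
  constructor
  · rintro ⟨w, s, f, hs, hf, hc, rfl⟩
    match s, hs, hc with
    | .inl s, hs, hc =>
      obtain ⟨q, rfl, hc2⟩ := FA.union_chain_inl A B hc s rfl
      refine Or.inl ⟨w, s, q, hs, hf, ?_, rfl⟩
      exact hc2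
    | .inr s, hs, hc =>
      obtain ⟨q, rfl, hc2⟩ := FA.union_chain_inr A B hc s rfl
      exact Or.inr ⟨w, s, q, hs, hf, hc2, rfl⟩
  · rintro (⟨w, s, f, hs, hf, hc, rfl⟩ | ⟨w, s, f, hs, hf, hc, rfl⟩)
    · exact ⟨w, .inl s, .inl f, hs, hf, FA.union_chain_of_inl A B hc, rfl⟩
    · exact ⟨w, .inr s, .inr f, hs, hf, FA.union_chain_of_inr A B hc, rfl⟩

theorem FA.union_letters (A B : FA G) :
    (A.union B).Letters ⊆ A.Letters ∪ B.Letters := by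
  rintro g ⟨p, q, ht⟩
  match p, q, ht with
  | .inl p, .inl q, ht => exact Or.inl ⟨p, q, ht⟩
  | .inr p, .inr q, ht => exact Or.inr ⟨p, q, ht⟩

/-! ### Product -/

def FA.mul (A B : FA G) : FA G where
  Q := A.Q ⊕ B.Q
  start x := match x with | .inl p => A.start p | .inr _ => False
  accept x := match x with
    | .inl p => A.accept p ∧ ∃ s, B.start s ∧ B.accept s
    | .inr q => B.accept q
  tr x g y := match x, y with
    | .inl p, .inl q => A.tr p g q
    | .inr p, .inr q => B.tr p g q
    | .inl p, .inr q => A.accept p ∧ ∃ s, B.start s ∧ B.tr s g q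
    | .inr _, .inl _ => False

theorem FA.mul_chain_inr (A B : FA G) : ∀ {x w y}, (A.mul B).Chain x w y →
    ∀ p, x = Sum.inr p → ∃ q, y = Sum.inr q ∧ B.Chain p w q := by
  intro x w y h
  induction h with
  | nil q => exact fun p hp => ⟨p, hp, FA.Chain.nil p⟩
  | @cons x' q' r g w t c ih =>
    rintro p rfl
    match q', t with
    | .inr q', t =>
      obtain ⟨q, rfl, hc⟩ := ih q' rfl
      exact ⟨q, rfl, FA.Chain.cons t hc⟩

theorem FA.mul_chain_of_inl (A B : FA G) {p w q} (h : A.Chain p w q) :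
    (A.mul B).Chain (Sum.inl p) w (Sum.inl q) := by
  induction h with
  | nil q => exact FA.Chain.nil _
  | cons t _ ih => exact FA.Chain.cons (show (A.mul B).tr (.inl _) _ (.inl _) from t) ih

theorem FA.mul_chain_of_inr (A B : FA G) {p w q} (h : B.Chain p w q) :
    (A.mul B).Chain (Sum.inr p) w (Sum.inr q) := by
  induction h with
  | nil q => exact FA.Chain.nil _
  | cons t _ ih => exact FA.Chain.cons (show (A.mul B).tr (.inr _) _ (.inr _) from t) ih

theorem FA.mul_chain_inl (A B : FA G) : ∀ {x w y}, (A.mul B).Chain x w y →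
    ∀ p, x = Sum.inl p →
      (∃ q, y = Sum.inl q ∧ A.Chain p w q) ∨
      (∃ w1 g w2 f q1 q2, w = w1 ++ g :: w2 ∧ A.Chain p w1 f ∧ A.accept f ∧
        (∃ s, B.start s ∧ B.tr s g q1) ∧ B.Chain q1 w2 q2 ∧ y = Sum.inr q2) := by
  intro x w y h
  induction h with
  | nil q => exact fun p hp => Or.inl ⟨p, hp, FA.Chain.nil p⟩
  | @cons x' q' r g w t c ih =>
    rintro p rfl
    match q', t, c, ih with
    | .inl q', t, c, ih =>
      rcases ih q' rfl with ⟨q, rfl, hc⟩ | ⟨w1, g', w2, f, q1, q2, rfl, hc1, hf, hbr, hc2, rfl⟩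
      · exact Or.inl ⟨q, rfl, FA.Chain.cons t hc⟩
      · exact Or.inr ⟨g :: w1, g', w2, f, q1, q2, rfl, FA.Chain.cons t hc1, hf, hbr, hc2, rfl⟩
    | .inr q', t, c, ih =>
      obtain ⟨hf, s, hs, htr⟩ := t
      obtain ⟨q2, rfl, hc2⟩ := FA.mul_chain_inr A B c q' rfl
      exact Or.inr ⟨[], g, w, p, q', q2, rfl, FA.Chain.nil p, hf, ⟨s, hs, htr⟩, hc2, rfl⟩

theorem FA.mul_lang (A B : FA G) : (A.mul B).Lang = A.Lang * B.Lang := by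
  ext x
  constructor
  · rintro ⟨w, s, f, hs, hf, hc, rfl⟩
    match s, hs, hc with
    | .inl s, hs, hc =>
      rcases FA.mul_chain_inl A B hc s rfl
        with ⟨q, rfl, hc2⟩ | ⟨w1, g, w2, f', q1, q2, rfl, hc1, hf', hbr, hc2, rfl⟩
      · obtain ⟨hq, s2, hs2, ha2⟩ := hf
        refine ⟨w.prod, ⟨w, s, q, hs, hq, hc2, rfl⟩, 1,
          ⟨[], s2, s2, hs2, ha2, FA.Chain.nil _, rfl⟩, (mul_one _)⟩
      · obtain ⟨s2, hs2, htr⟩ := hbr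
        refine ⟨w1.prod, ⟨w1, s, f', hs, hf', hc1, rfl⟩, (g :: w2).prod,
          ⟨g :: w2, s2, q2, hs2, hf, FA.Chain.cons htr hc2, rfl⟩, ?_⟩
        simp [List.prod_append]
  · rintro ⟨a, ⟨wa, sa, fa, hsa, hfa, hca, rfl⟩, b, ⟨wb, sb, fb, hsb, hfb, hcb, rfl⟩, rfl⟩
    match wb, hcb with
    | [], hcb =>
      obtain rfl := FA.Chain.nil_eq hcb
      refine ⟨wa, .inl sa, .inl fa, hsa, ⟨hfa, sb, hsb, hfb⟩, FA.mul_chain_of_inl A B hca, by simp⟩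
    | g :: wb', hcb =>
      cases hcb with
      | cons htr hcb' =>
        refine ⟨wa ++ g :: wb', .inl sa, .inr fb, hsa, hfb,
          FA.Chain.append (FA.mul_chain_of_inl A B hca)
            (FA.Chain.cons (show (A.mul B).tr (.inl fa) g (.inr _) from ⟨hfa, sb, hsb, htr⟩)
              (FA.mul_chain_of_inr A B hcb')), by simp [List.prod_append]⟩

theorem FA.mul_letters (A B : FA G) :
    (A.mul B).Letters ⊆ A.Letters ∪ B.Letters := by
  rintro g ⟨p, q, ht⟩
  match p, q, ht with
  | .inl p, .inl q, ht => exact Or.inl ⟨p, q, ht⟩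
  | .inr p, .inr q, ht => exact Or.inr ⟨p, q, ht⟩
  | .inl p, .inr q, ht => exact Or.inr ⟨ht.2.choose, q, ht.2.choose_spec.2⟩

/-! ### Star -/

def FA.star (A : FA G) : FA G where
  Q := Option A.Q
  start x := x = none
  accept x := match x with | none => True | some q => A.accept q
  tr x g y := match x, y with
    | none, some q => ∃ s, A.start s ∧ A.tr s g q
    | some p, some q => A.tr p g q ∨ (A.accept p ∧ ∃ s, A.start s ∧ A.tr s g q)
    | _, none => False

theorem FA.star_chain_of (A : FA G) {p w q} (h : A.Chain p w q) :
    A.star.Chain (some p) w (some q) := by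
  induction h with
  | nil q => exact FA.Chain.nil _
  | cons t _ ih => exact FA.Chain.cons (show A.star.tr (some _) _ (some _) from Or.inl t) ih

theorem FA.star_lang_subset (A : FA G) : A.Lang ⊆ A.star.Lang := by
  rintro x ⟨w, s, f, hs, hf, hc, rfl⟩
  match w, hc with
  | [], hc =>
    obtain rfl := FA.Chain.nil_eq hc
    exact ⟨[], none, none, rfl, trivial, FA.Chain.nil _, rfl⟩
  | g :: w', hc =>
    cases hc with
    | cons htr hc' =>
      exact ⟨g :: w', none, some f, rfl, hf,
        FA.Chain.cons (show A.star.tr none g (some _) from ⟨s, hs, htr⟩)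
          (FA.star_chain_of A hc'), rfl⟩

theorem FA.star_one_mem (A : FA G) : (1 : G) ∈ A.star.Lang :=
  ⟨[], none, none, rfl, trivial, FA.Chain.nil _, rfl⟩

theorem FA.star_mul_mem (A : FA G) : ∀ x ∈ A.star.Lang, ∀ y ∈ A.star.Lang,
    x * y ∈ A.star.Lang := by
  rintro x ⟨wx, sx, fx, hsx, hfx, hcx, rfl⟩ y ⟨wy, sy, fy, hsy, hfy, hcy, rfl⟩
  change sx = none at hsx
  change sy = none at hsy
  subst hsx; subst hsy
  match wy, hcy with
  | [], hcy =>
    obtain rfl := FA.Chain.nil_eq hcy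
    exact ⟨wx, none, fx, rfl, hfx, hcx, by simp⟩
  | g :: wy', hcy =>
    match FA.Chain.cons_inv hcy with
    | ⟨q, htr, hcy'⟩ =>
      have hstep : A.star.tr fx g q := by
        match q, htr with
        | some q, htr =>
          match fx, hfx with
          | none, _ => exact htr
          | some fx, hfx => exact Or.inr ⟨hfx, htr⟩
      exact ⟨wx ++ g :: wy', none, fy, rfl, hfy,
        FA.Chain.append hcx (FA.Chain.cons hstep hcy'), by simp [List.prod_append]⟩

/-- Decomposition of a star chain starting inside the original automaton. -/
theorem FA.star_chain_some (A : FA G) : ∀ {x w y}, A.star.Chain x w y →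
    ∀ p, x = some p → A.star.accept y →
      ∃ w1 f z, A.Chain p w1 f ∧ A.accept f ∧ w.prod = w1.prod * z ∧
        z ∈ Submonoid.closure A.Lang := by
  intro x w y h
  induction h with
  | nil q =>
    rintro p rfl hacc
    exact ⟨[], p, 1, FA.Chain.nil p, hacc, by simp, one_mem _⟩
  | @cons x' q' r g w t c ih =>
    rintro p rfl hacc
    match q', t, c, ih with
    | some q', t, c, ih =>
      obtain ⟨w1, f, z, hc1, hf, hprod, hz⟩ := ih q' rfl hacc
      rcases t with ht | ⟨hap, s, hs, htr⟩
      · exact ⟨g :: w1, f, z, FA.Chain.cons ht hc1, hf, by simp [hprod, mul_assoc], hz⟩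
      · refine ⟨[], p, (g :: w1).prod * z, FA.Chain.nil p, hap, by simp [hprod, mul_assoc], ?_⟩
        exact mul_mem (Submonoid.subset_closure ⟨g :: w1, s, f,
          hs, hf, FA.Chain.cons htr hc1, rfl⟩) hz

theorem FA.star_lang (A : FA G) : A.star.Lang = (Submonoid.closure A.Lang : Set G) := by
  apply le_antisymm
  · rintro x ⟨w, s, f, hs, hf, hc, rfl⟩
    change s = none at hs
    subst hs
    match w, hc with
    | [], hc => simpa using one_mem (Submonoid.closure A.Lang)
    | g :: w', hc =>
      match FA.Chain.cons_inv hc with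
      | ⟨q, htr, hc'⟩ =>
        match q, htr with
        | some q, htr =>
          obtain ⟨s1, hs1, htr1⟩ := htr
          obtain ⟨w1, f1, z, hc1, hf1, hprod, hz⟩ := FA.star_chain_some A hc' q rfl hf
          have h1 : (g :: w1).prod ∈ A.Lang :=
            ⟨g :: w1, s1, f1, hs1, hf1, FA.Chain.cons htr1 hc1, rfl⟩
          have : (g :: w').prod = (g :: w1).prod * z := by simp [hprod, mul_assoc]
          rw [this]
          exact mul_mem (Submonoid.subset_closure h1) hz
  · intro x hx
    refine Submonoid.closure_induction (fun y hy => FA.star_lang_subset A hy)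
      (FA.star_one_mem A) (fun a b _ _ ha hb => FA.star_mul_mem A a ha b hb) hx

theorem FA.star_letters (A : FA G) : A.star.Letters ⊆ A.Letters := by
  rintro g ⟨p, q, ht⟩
  match p, q, ht with
  | none, some q, ⟨s, _, ht⟩ => exact ⟨s, q, ht⟩
  | some p, some q, Or.inl ht => exact ⟨p, q, ht⟩
  | some p, some q, Or.inr ⟨_, s, _, ht⟩ => exact ⟨s, q, ht⟩

/-! ### Every rational subset is recognized by a finite automaton -/

theorem exists_fa {L : Set G} (h : IsRationalSubset L) :
    ∃ A : FA G, Finite A.Q ∧ A.Letters.Finite ∧ A.Lang = L := by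
  induction h with
  | finite L hL =>
    exact ⟨FA.ofSet L, Bool.instFinite, hL.subset (FA.ofSet_letters L), FA.ofSet_lang L⟩
  | union _ _ ihK ihL =>
    obtain ⟨A, hA1, hA2, rfl⟩ := ihK
    obtain ⟨B, hB1, hB2, rfl⟩ := ihL
    exact ⟨A.union B, by have := hA1; have := hB1; exact (inferInstance : Finite (A.Q ⊕ B.Q)),
      (hA2.union hB2).subset (FA.union_letters A B), FA.union_lang A B⟩
  | mul _ _ ihK ihL =>
    obtain ⟨A, hA1, hA2, rfl⟩ := ihK
    obtain ⟨B, hB1, hB2, rfl⟩ := ihL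
    exact ⟨A.mul B, by have := hA1; have := hB1; exact (inferInstance : Finite (A.Q ⊕ B.Q)),
      (hA2.union hB2).subset (FA.mul_letters A B), FA.mul_lang A B⟩
  | star _ ih =>
    obtain ⟨A, hA1, hA2, rfl⟩ := ih
    exact ⟨A.star, by haveI := hA1; haveI := Fintype.ofFinite A.Q; exact (inferInstance : Finite (Option A.Q)),
      hA2.subset (FA.star_letters A), FA.star_lang A⟩

/-! ### A recognized subgroup is finitely generated -/

theorem fg_of_fa {G : Type} [Group G] (A : FA G) (hQ : Finite A.Q)
    (hLet : A.Letters.Finite) (H : Subgroup G) (hLang : A.Lang = H) : H.FG := by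
  classical
  haveI := hQ
  set Reach : A.Q → Prop := fun q => ∃ w s, A.start s ∧ A.Chain s w q with hReach
  set CoReach : A.Q → Prop := fun q => ∃ w f, A.accept f ∧ A.Chain q w f with hCoReach
  set u : A.Q → G := fun q =>
    if A.start q then 1 else if h : Reach q then h.choose.prod else 1 with hu_def
  set v : A.Q → G := fun q =>
    if A.accept q then 1 else if h : CoReach q then h.choose.prod else 1 with hv_def
  have hu : ∀ q, Reach q → ∃ w s, A.start s ∧ A.Chain s w q ∧ w.prod = u q := by
    intro q hq
    by_cases hs : A.start q
    · exact ⟨[], q, hs, FA.Chain.nil q, by simp [hu_def, hs]⟩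
    · obtain ⟨s, hs', hc⟩ := hq.choose_spec
      exact ⟨hq.choose, s, hs', hc, by simp [hu_def, hs, dif_pos hq]⟩
  have hv : ∀ q, CoReach q → ∃ w f, A.accept f ∧ A.Chain q w f ∧ w.prod = v q := by
    intro q hq
    by_cases hf : A.accept q
    · exact ⟨[], q, hf, FA.Chain.nil q, by simp [hv_def, hf]⟩
    · obtain ⟨f, hf', hc⟩ := hq.choose_spec
      exact ⟨hq.choose, f, hf', hc, by simp [hv_def, hf, dif_pos hq]⟩
  set S : Set G :=
    ((fun t : A.Q × G × A.Q => u t.1 * t.2.1 * v t.2.2) ''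
      {t | A.tr t.1 t.2.1 t.2.2 ∧ Reach t.1 ∧ CoReach t.2.2}) ∪
    ((fun q => u q * v q) '' {q | Reach q ∧ CoReach q}) with hS_def
  have hmem1 : ∀ p g (q : A.Q), A.tr p g q → Reach p → CoReach q →
      u p * g * v q ∈ S := by
    intro p g q ht hp hq
    rw [hS_def]
    exact Set.mem_union_left _ ⟨(p, g, q), ⟨ht, hp, hq⟩, rfl⟩
  have hmem2 : ∀ q : A.Q, Reach q → CoReach q → u q * v q ∈ S := by
    intro q h1 h2
    rw [hS_def]
    exact Set.mem_union_right _ ⟨q, ⟨h1, h2⟩, rfl⟩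
  -- S is finite
  have hT : ({t : A.Q × G × A.Q | A.tr t.1 t.2.1 t.2.2}).Finite := by
    refine Set.Finite.subset (Set.finite_univ.prod (hLet.prod Set.finite_univ)) ?_
    rintro ⟨p, g, q⟩ ht
    exact ⟨trivial, ⟨p, q, ht⟩, trivial⟩
  have hSfin : S.Finite := by
    apply Set.Finite.union
    · exact (hT.subset (fun t ht => ht.1)).image _
    · exact (Set.toFinite _).image _
  -- S ⊆ H
  have hSH : S ⊆ (H : Set G) := by
    rintro x (⟨⟨p, g, q⟩, ⟨ht, hp, hq⟩, rfl⟩ | ⟨q, ⟨hq1, hq2⟩, rfl⟩)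
    · obtain ⟨w1, s, hs, hc1, hp1⟩ := hu p hp
      obtain ⟨w2, f, hf, hc2, hq2'⟩ := hv q hq
      have : u p * g * v q ∈ A.Lang :=
        ⟨w1 ++ g :: w2, s, f, hs, hf, hc1.append (FA.Chain.cons ht hc2),
          by simp [List.prod_append, hp1, hq2', mul_assoc]⟩
      rwa [hLang] at this
    · obtain ⟨w1, s, hs, hc1, hp1⟩ := hu q hq1
      obtain ⟨w2, f, hf, hc2, hq2'⟩ := hv q hq2
      have : u q * v q ∈ A.Lang :=
        ⟨w1 ++ w2, s, f, hs, hf, hc1.append hc2, by simp [List.prod_append, hp1, hq2']⟩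
      rwa [hLang] at this
  -- telescoping
  have key : ∀ {p w q}, A.Chain p w q → Reach p → CoReach q →
      u p * w.prod * v q ∈ Subgroup.closure S := by
    intro p w q hc
    induction hc with
    | nil q =>
      intro h1 h2
      simpa using Subgroup.subset_closure (hmem2 q h1 h2)
    | @cons p q r g w t c ih =>
      intro hp hr
      have hq : Reach q := by
        obtain ⟨w1, s, hs, hc1⟩ := hp
        exact ⟨w1 ++ [g], s, hs, hc1.append (FA.Chain.cons t (FA.Chain.nil _))⟩
      have hcq : CoReach q := by
        obtain ⟨w2, f, hf, hc2⟩ := hr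
        exact ⟨w ++ w2, f, hf, c.append hc2⟩
      have h1 : u p * g * v q ∈ Subgroup.closure S :=
        Subgroup.subset_closure (hmem1 p g q t hp hcq)
      have h2 : u q * v q ∈ Subgroup.closure S :=
        Subgroup.subset_closure (hmem2 q hq hcq)
      have h3 := mul_mem (mul_mem h1 (inv_mem h2)) (ih hq hr)
      have heq : u p * (g :: w).prod * v r =
          (u p * g * v q) * (u q * v q)⁻¹ * (u q * w.prod * v r) := by
        rw [List.prod_cons]; group
      rwa [heq]
  -- conclude
  refine (Subgroup.fg_iff H).mpr ⟨S, le_antisymm ?_ ?_, hSfin⟩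
  · exact (Subgroup.closure_le H).mpr hSH
  · intro x hx
    have hx' : x ∈ A.Lang := by rw [hLang]; exact hx
    obtain ⟨w, s, f, hs, hf, hc, rfl⟩ := hx'
    have hus : u s = 1 := by simp [hu_def, hs]
    have hvf : v f = 1 := by simp [hv_def, hf]
    have := key hc ⟨[], s, hs, FA.Chain.nil s⟩ ⟨[], f, hf, FA.Chain.nil f⟩
    simpa [hus, hvf] using this

end AniSei

open AniSei in
/-- Anisimov–Seifert: a subgroup of a group is a rational subset iff it is
finitely generated. -/
theorem anisimov_seifert {G : Type} [Group G] (H : Subgroup G) :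
    IsRationalSubset (H : Set G) ↔ H.FG := by
  constructor
  · intro h
    obtain ⟨A, hQ, hLet, hLang⟩ := exists_fa h
    exact fg_of_fa A hQ hLet H hLang
  · rintro ⟨S, rfl⟩
    have h1 : ((Subgroup.closure (S : Set G) : Subgroup G) : Set G) =
        (Submonoid.closure ((S : Set G) ∪ (S : Set G)⁻¹) : Set G) := by
      rw [← Subgroup.closure_toSubmonoid]
      rfl
    rw [h1]
    exact IsRationalSubset.star (IsRationalSubset.finite _
      (S.finite_toSet.union S.finite_toSet.inv))
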